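/- With S a commutative local ring with involution, 2 a unit, V free of rank 2m ≥ 4 with nondegenerate skew hermitian form and symplectic basis: the subgroup T generated by unitary transvections f_{a,v} (a ∈ R, v a basis vector of length 0) acts transitively on symplectic pairs in V, i.e., on pairs (u,v) with h(u,u) = h(v,v) = 0 and h(u,v) = 1 with u,v part of a symplectic set. -/

import Mathlib

variable {S V : Type*} [CommRing S] [StarRing S] [AddCommGroup V] [Module S V]

/-- `b` is a symplectic basis for the skew hermitian form `h`. -/
def IsSympBasis {m : ℕ} (h : V →ₛₗ[starRingEnd S] V →ₗ[S] S)
    (b : Module.Basis (Fin m ⊕ Fin m) S V) : Prop :=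
  (∀ i j, h (b (.inl i)) (b (.inr j)) = if i = j then 1 else 0) ∧
  (∀ i j, h (b (.inl i)) (b (.inl j)) = 0) ∧
  (∀ i j, h (b (.inr i)) (b (.inr j)) = 0)

/-- `v` is a basis vector of the free module `V` of rank `2m`. -/
def IsBasisVector (S : Type*) {V : Type*} [CommRing S] [AddCommGroup V] [Module S V]
    (m : ℕ) (v : V) : Prop :=
  ∃ (c : Module.Basis (Fin m ⊕ Fin m) S V) (i : Fin m ⊕ Fin m), c i = v

/-- The unitary transvection `f_{a,v} : u ↦ u + a h(v,u) v`. -/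
def transvect (h : V →ₛₗ[starRingEnd S] V →ₗ[S] S) (a : S) (v : V) : Module.End S V :=
  LinearMap.id + LinearMap.smulRight (a • h v) v

/-- The set of invertible endomorphisms given by unitary transvections `f_{a,v}`
with `a ∈ R` and `v` a basis vector of length zero. -/
def transvSet (h : V →ₛₗ[starRingEnd S] V →ₗ[S] S) (m : ℕ) : Set (Module.End S V)ˣ :=
  {g | ∃ (a : S) (v : V), star a = a ∧ h v v = 0 ∧ IsBasisVector S m v ∧
    (g : Module.End S V) = transvect h a v}

/- ===================  auxiliary lemmas  =================== -/

section Aux13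

variable {m : ℕ}

theorem stmt13_sum_unit [IsLocalRing S] {ι : Type*} (s : Finset ι) (f : ι → S)
    (hs : IsUnit (∑ i ∈ s, f i)) : ∃ i ∈ s, IsUnit (f i) := by
  classical
  induction s using Finset.induction_on with
  | empty =>
      rw [Finset.sum_empty] at hs
      exact absurd hs not_isUnit_zero
  | insert a s ha ih =>
      rw [Finset.sum_insert ha] at hs
      rcases IsLocalRing.isUnit_or_isUnit_of_isUnit_add hs with h1 | h2
      · exact ⟨a, Finset.mem_insert_self a s, h1⟩
      · obtain ⟨i, hi, hu⟩ := ih h2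
        exact ⟨i, Finset.mem_insert_of_mem hi, hu⟩

theorem stmt13_unit_add_nonunit [IsLocalRing S] {a c : S} (ha : IsUnit a) (hc : ¬ IsUnit c) :
    IsUnit (a + c) := by
  rcases IsLocalRing.isUnit_or_isUnit_of_isUnit_add
      (a := a + c) (b := -c) (by simpa using ha) with h1 | h2
  · exact h1
  · exact absurd (by simpa using h2) hc

theorem stmt13_nonunit_add_unit [IsLocalRing S] {a c : S} (ha : ¬ IsUnit a) (hc : IsUnit c) :
    IsUnit (a + c) := by
  rw [add_comm]; exact stmt13_unit_add_nonunit hc ha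

theorem stmt13_star_unit_inv {γ : Sˣ} (hγ : star (↑γ : S) = ↑γ) :
    star (↑γ⁻¹ : S) = ↑γ⁻¹ := by
  have h1 : star (↑γ⁻¹ : S) * ↑γ = 1 := by
    have h0 := congrArg star γ.inv_mul
    rw [star_mul, star_one, hγ] at h0
    rw [mul_comm] at h0
    exact h0
  calc star (↑γ⁻¹ : S) = star (↑γ⁻¹ : S) * (↑γ * ↑γ⁻¹) := by rw [γ.mul_inv, mul_one]
    _ = (star (↑γ⁻¹ : S) * ↑γ) * ↑γ⁻¹ := by ring
    _ = ↑γ⁻¹ := by rw [h1, one_mul]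

theorem stmt13_isBasisVector_of_unit_coord (b : Module.Basis (Fin m ⊕ Fin m) S V) {x : V}
    {k : Fin m ⊕ Fin m} (hx : IsUnit (b.repr x k)) : IsBasisVector S m x := by
  classical
  obtain ⟨r, hr⟩ := hx
  set φ : Module.End S V := LinearMap.id + LinearMap.smulRight (b.coord k) (x - b k) with hφ
  set ψ : Module.End S V :=
    LinearMap.id + LinearMap.smulRight (b.coord k) ((↑r⁻¹ : S) • (b k - x)) with hψ
  have hφapp : ∀ w, φ w = w + (b.repr w k) • (x - b k) := by
    intro w
    simp [hφ, Module.Basis.coord_apply]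
  have hψapp : ∀ w, ψ w = w + ((b.repr w k) * (↑r⁻¹ : S)) • (b k - x) := by
    intro w
    simp [hψ, Module.Basis.coord_apply, smul_smul]
  have key1 : ∀ w, φ (ψ w) = w := by
    intro w
    rw [hψapp, hφapp]
    have h2 : b.repr (w + ((b.repr w k) * (↑r⁻¹ : S)) • (b k - x)) k
        = b.repr w k * (↑r⁻¹ : S) := by
      simp only [map_add, map_smul, map_sub, Finsupp.add_apply, Finsupp.smul_apply,
        Finsupp.sub_apply, Module.Basis.repr_self, Finsupp.single_apply, if_pos rfl, if_true, smul_eq_mul,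
        ← hr]
      linear_combination (-(b.repr w k : S)) * r.inv_mul
    rw [h2]
    module
  have key2 : ∀ w, ψ (φ w) = w := by
    intro w
    rw [hφapp, hψapp]
    have h2 : b.repr (w + (b.repr w k) • (x - b k)) k = b.repr w k * (↑r : S) := by
      simp only [map_add, map_smul, map_sub, Finsupp.add_apply, Finsupp.smul_apply,
        Finsupp.sub_apply, Module.Basis.repr_self, Finsupp.single_apply, if_pos rfl, if_true, smul_eq_mul,
        ← hr]
      ring
    rw [h2]
    have h3 : (b.repr w k * (↑r : S)) * (↑r⁻¹ : S) = b.repr w k := by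
      linear_combination (b.repr w k : S) * r.mul_inv
    rw [h3]
    module
  refine ⟨b.map (LinearEquiv.ofLinear φ ψ ?_ ?_), k, ?_⟩
  · ext w
    simpa using key1 w
  · ext w
    simpa using key2 w
  · rw [Module.Basis.map_apply, LinearEquiv.ofLinear_apply, hφapp]
    simp [Module.Basis.repr_self]

end Aux13
section Aux13B

variable {m : ℕ} {h : V →ₛₗ[starRingEnd S] V →ₗ[S] S}

theorem stmt13_skew' (hskew : ∀ x y, star (h x y) = - h y x) (x y : V) :
    h y x = - star (h x y) := by
  rw [hskew x y, neg_neg]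

theorem stmt13_p_fe {b : Module.Basis (Fin m ⊕ Fin m) S V}
    (hskew : ∀ x y, star (h x y) = - h y x) (hb : IsSympBasis h b) (i j : Fin m) :
    h (b (Sum.inr i)) (b (Sum.inl j)) = if j = i then -1 else 0 := by
  rw [stmt13_skew' hskew (b (Sum.inl j)) (b (Sum.inr i)), hb.1 j i]
  split <;> simp

theorem stmt13_coordL {b : Module.Basis (Fin m ⊕ Fin m) S V}
    (hb : IsSympBasis h b) (x : V) (j : Fin m) :
    h (b (Sum.inl j)) x = b.repr x (Sum.inr j) := by
  conv_lhs => rw [← b.sum_repr x]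
  simp only [map_add, map_sum, map_smul, smul_eq_mul, Fintype.sum_sum_type, hb.1, hb.2.1, mul_ite,
    mul_one, mul_zero, Finset.sum_ite_eq, Finset.mem_univ, if_true, Finset.sum_const_zero,
    add_zero, zero_add]

theorem stmt13_coordR {b : Module.Basis (Fin m ⊕ Fin m) S V}
    (hskew : ∀ x y, star (h x y) = - h y x) (hb : IsSympBasis h b) (x : V) (j : Fin m) :
    h (b (Sum.inr j)) x = - b.repr x (Sum.inl j) := by
  conv_lhs => rw [← b.sum_repr x]
  simp only [map_add, map_sum, map_smul, smul_eq_mul, Fintype.sum_sum_type, stmt13_p_fe hskew hb,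
    hb.2.2, mul_ite, mul_neg_one, mul_zero, Finset.sum_ite_eq', Finset.mem_univ, if_true,
    Finset.sum_const_zero, add_zero, zero_add]

theorem stmt13_coordL' {b : Module.Basis (Fin m ⊕ Fin m) S V}
    (hskew : ∀ x y, star (h x y) = - h y x) (hb : IsSympBasis h b) (x : V) (j : Fin m) :
    h x (b (Sum.inl j)) = - star (b.repr x (Sum.inr j)) := by
  rw [stmt13_skew' hskew (b (Sum.inl j)) x, stmt13_coordL hb]

theorem stmt13_coordR' {b : Module.Basis (Fin m ⊕ Fin m) S V}
    (hskew : ∀ x y, star (h x y) = - h y x) (hb : IsSympBasis h b) (x : V) (j : Fin m) :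
    h x (b (Sum.inr j)) = star (b.repr x (Sum.inl j)) := by
  rw [stmt13_skew' hskew (b (Sum.inr j)) x, stmt13_coordR hskew hb]
  simp

theorem stmt13_exists_unit_coord [IsLocalRing S] (b : Module.Basis (Fin m ⊕ Fin m) S V) {x y : V}
    (hxy : IsUnit (h x y)) : ∃ k, IsUnit (b.repr x k) := by
  classical
  have hx : h x y = ∑ k, star (b.repr x k) * ((h (b k)) y) := by
    conv_lhs => rw [← b.sum_repr x]
    rw [map_sum, LinearMap.sum_apply]
    refine Finset.sum_congr rfl fun k _ => ?_
    rw [LinearMap.map_smulₛₗ, LinearMap.smul_apply, smul_eq_mul, starRingEnd_apply]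
  rw [hx] at hxy
  obtain ⟨k, -, hk⟩ := stmt13_sum_unit _ _ hxy
  exact ⟨k, isUnit_star.mp (isUnit_of_mul_isUnit_left hk)⟩

theorem stmt13_transvect_apply (a : S) (w x : V) :
    transvect h a w x = x + (a * h w x) • w := by
  simp [transvect, LinearMap.smulRight_apply, smul_eq_mul]

theorem stmt13_transvect_mul (a a' : S) (w : V) (hww : h w w = 0) :
    (transvect h a w) * (transvect h a' w) = transvect h (a + a') w := by
  ext x
  simp only [Module.End.mul_apply, stmt13_transvect_apply, map_add, map_smul, hww,
    smul_eq_mul, mul_zero, add_zero]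
  module

theorem stmt13_transvect_zero (w : V) : transvect h 0 w = 1 := by
  ext x
  simp [stmt13_transvect_apply]

theorem stmt13_transvect_unit (a : S) (w : V) (hww : h w w = 0) :
    IsUnit (transvect h a w) := by
  refine ⟨⟨transvect h a w, transvect h (-a) w, ?_, ?_⟩, rfl⟩
  · rw [stmt13_transvect_mul a (-a) w hww, add_neg_cancel, stmt13_transvect_zero]
  · rw [stmt13_transvect_mul (-a) a w hww, neg_add_cancel, stmt13_transvect_zero]

end Aux13B
section Aux13C

variable {m : ℕ} {h : V →ₛₗ[starRingEnd S] V →ₗ[S] S}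

theorem stmt13_iso_add (hskew : ∀ x y, star (h x y) = - h y x) {z x : V}
    (hz : h z z = 0) (hxx : h x x = 0) (c : S)
    (hγh : star (c * h z x) = c * h z x) : h (z + c • x) (z + c • x) = 0 := by
  have hxz : h x z = - star (h z x) := stmt13_skew' hskew z x
  have h2 : star c * star (h z x) = c * h z x := by
    rw [← star_mul']; exact hγh
  simp only [map_add, LinearMap.map_smulₛₗ, LinearMap.add_apply, LinearMap.smul_apply,
    map_smul, smul_eq_mul, starRingEnd_apply, hz, hxx, hxz]
  linear_combination -h2

/-- The basic transvection move: a single unitary transvection taking `z` to `z'`,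
possible whenever `h z z'` is a hermitian unit, fixing everything that pairs
equally with `z` and `z'`. -/
theorem stmt13_atom [IsLocalRing S] (hskew : ∀ x y, star (h x y) = - h y x)
    (b : Module.Basis (Fin m ⊕ Fin m) S V) {z z' : V} (hz : h z z = 0) (hz' : h z' z' = 0)
    (hγu : IsUnit (h z z')) (hγh : star (h z z') = h z z') :
    ∃ g : (Module.End S V)ˣ, g ∈ transvSet h m ∧ (↑g : Module.End S V) z = z' ∧
      ∀ x, h z x = h z' x → (↑g : Module.End S V) x = x := by
  obtain ⟨γ, hγ⟩ := hγu
  have hsγ : star (↑γ : S) = ↑γ := by rw [hγ]; exact hγh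
  have hz'z : h z' z = -(↑γ : S) := by
    rw [stmt13_skew' hskew z z', hγh, ← hγ]
  set w := z' - z with hwdef
  set a : S := -(↑γ⁻¹ : S) with ha
  have hwz : h w z = -(↑γ : S) := by
    rw [hwdef, map_sub, LinearMap.sub_apply, hz'z, hz, sub_zero]
  have hww : h w w = 0 := by
    rw [hwdef]
    simp only [map_sub, LinearMap.sub_apply, hz, hz', hz'z, ← hγ]
    ring
  have hsa : star a = a := by rw [ha, star_neg, stmt13_star_unit_inv hsγ]
  have hbv : IsBasisVector S m w := by
    obtain ⟨k, hk⟩ := stmt13_exists_unit_coord b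
      (show IsUnit (h w z) by rw [hwz]; exact γ.isUnit.neg)
    exact stmt13_isBasisVector_of_unit_coord b hk
  have hu := stmt13_transvect_unit a w hww
  refine ⟨hu.unit, ⟨a, w, hsa, hww, hbv, hu.unit_spec⟩, ?_, ?_⟩
  · rw [hu.unit_spec, stmt13_transvect_apply, hwz]
    have h1 : a * (-(↑γ : S)) = (↑γ⁻¹ : S) * ↑γ := by rw [ha]; ring
    rw [h1, γ.inv_mul, one_smul, hwdef]
    abel
  · intro x hx
    rw [hu.unit_spec, stmt13_transvect_apply]
    have h0 : h w x = 0 := by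
      rw [hwdef, map_sub, LinearMap.sub_apply, hx, sub_self]
    rw [h0, mul_zero, zero_smul, add_zero]

theorem stmt13_closure_preserves [IsLocalRing S] (hskew : ∀ x y, star (h x y) = - h y x) :
    ∀ g ∈ Subgroup.closure (transvSet h m), ∀ x y,
      h ((↑g : Module.End S V) x) ((↑g : Module.End S V) y) = h x y := by
  intro g hg
  induction hg using Subgroup.closure_induction with
  | mem t ht =>
    obtain ⟨a, w, hsa, hww, -, hval⟩ := ht
    intro x y
    rw [hval, stmt13_transvect_apply, stmt13_transvect_apply]
    simp only [map_add, LinearMap.map_smulₛₗ, LinearMap.add_apply, LinearMap.smul_apply,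
      map_smul, smul_eq_mul, starRingEnd_apply, star_mul', hsa, hww, hskew, mul_zero]
    ring
  | one =>
    intro x y
    simp
  | mul p q _ _ hp hq =>
    intro x y
    rw [Units.val_mul, Module.End.mul_apply, Module.End.mul_apply, hp, hq]
  | inv p _ hp =>
    intro x y
    have h1 : ∀ t, (↑p : Module.End S V) ((↑p⁻¹ : Module.End S V) t) = t := by
      intro t
      rw [← Module.End.mul_apply, Units.mul_inv, Module.End.one_apply]
    calc h ((↑p⁻¹ : Module.End S V) x) ((↑p⁻¹ : Module.End S V) y)
        = h ((↑p : Module.End S V) ((↑p⁻¹ : Module.End S V) x))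
            ((↑p : Module.End S V) ((↑p⁻¹ : Module.End S V) y)) := (hp _ _).symm
      _ = h x y := by rw [h1, h1]

theorem stmt13_comp2 {z1 z2 z3 : V}
    (h1 : ∃ g ∈ Subgroup.closure (transvSet h m), (↑g : Module.End S V) z1 = z2)
    (h2 : ∃ g ∈ Subgroup.closure (transvSet h m), (↑g : Module.End S V) z2 = z3) :
    ∃ g ∈ Subgroup.closure (transvSet h m), (↑g : Module.End S V) z1 = z3 := by
  obtain ⟨g1, hm1, he1⟩ := h1
  obtain ⟨g2, hm2, he2⟩ := h2
  exact ⟨g2 * g1, mul_mem hm2 hm1, by rw [Units.val_mul, Module.End.mul_apply, he1, he2]⟩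

theorem stmt13_comp2F {e z1 z2 z3 : V}
    (h1 : ∃ g ∈ Subgroup.closure (transvSet h m),
      (↑g : Module.End S V) z1 = z2 ∧ (↑g : Module.End S V) e = e)
    (h2 : ∃ g ∈ Subgroup.closure (transvSet h m),
      (↑g : Module.End S V) z2 = z3 ∧ (↑g : Module.End S V) e = e) :
    ∃ g ∈ Subgroup.closure (transvSet h m),
      (↑g : Module.End S V) z1 = z3 ∧ (↑g : Module.End S V) e = e := by
  obtain ⟨g1, hm1, he1, hf1⟩ := h1
  obtain ⟨g2, hm2, he2, hf2⟩ := h2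
  exact ⟨g2 * g1, mul_mem hm2 hm1,
    by rw [Units.val_mul, Module.End.mul_apply, he1, he2],
    by rw [Units.val_mul, Module.End.mul_apply, hf1, hf2]⟩

end Aux13C
section Aux13D

variable {m : ℕ} {h : V →ₛₗ[starRingEnd S] V →ₗ[S] S}

/-- Step 1: the transvection group moves any isotropic vector with a unit pairing
to the basis vector `e_{i0}`. -/
theorem stmt13_step1 [IsLocalRing S] (hskew : ∀ x y, star (h x y) = - h y x)
    (b : Module.Basis (Fin m ⊕ Fin m) S V) (hb : IsSympBasis h b)
    {i0 i1 : Fin m} (hne : i1 ≠ i0) {u y : V} (hu0 : h u u = 0) (huy : IsUnit (h u y)) :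
    ∃ g ∈ Subgroup.closure (transvSet h m),
      (↑g : Module.End S V) u = b (Sum.inl i0) := by
  classical
  -- Phase A : reach u₂ with a unit coordinate outside slot i0
  have phaseA : ∃ u₂ : V,
      (∃ g ∈ Subgroup.closure (transvSet h m), (↑g : Module.End S V) u = u₂)
      ∧ h u₂ u₂ = 0
      ∧ ∃ J : Fin m, J ≠ i0 ∧
        (IsUnit (b.repr u₂ (Sum.inl J)) ∨ IsUnit (b.repr u₂ (Sum.inr J))) := by
    by_cases H : ∃ J, J ≠ i0 ∧
        (IsUnit (b.repr u (Sum.inl J)) ∨ IsUnit (b.repr u (Sum.inr J)))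
    · exact ⟨u, ⟨1, one_mem _, by simp⟩, hu0, H⟩
    · push_neg at H
      obtain ⟨k, hk⟩ := stmt13_exists_unit_coord b huy
      have hk0 : IsUnit (b.repr u (Sum.inl i0)) ∨ IsUnit (b.repr u (Sum.inr i0)) := by
        rcases k with j | j
        · rcases eq_or_ne j i0 with rfl | hj
          · exact Or.inl hk
          · exact absurd hk (H j hj).1
        · rcases eq_or_ne j i0 with rfl | hj
          · exact Or.inr hk
          · exact absurd hk (H j hj).2
      by_cases hc : IsUnit (b.repr u (Sum.inr i0))
      · -- bump along x = e_{i1} + e_{i0}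
        set x : V := b (Sum.inl i1) + b (Sum.inl i0) with hx
        have hxx : h x x = 0 := by
          simp [hx, map_add, LinearMap.add_apply, hb.2.1]
        have hux : h u x
            = -(star (b.repr u (Sum.inr i1)) + star (b.repr u (Sum.inr i0))) := by
          simp only [hx, map_add, stmt13_coordL' hskew hb]
          ring
        have huxu : IsUnit (h u x) := by
          rw [hux]
          exact (stmt13_nonunit_add_unit
            (fun hh => (H i1 hne).2 (isUnit_star.mp hh)) hc.star).neg
        obtain ⟨ρ, hρ⟩ := huxu
        set c : S := (↑ρ⁻¹ : S) with hcdef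
        have hcu : c * h u x = 1 := by rw [hcdef, ← hρ]; exact ρ.inv_mul
        have hherm : star (c * h u x) = c * h u x := by rw [hcu, star_one]
        have hpair : h u (u + c • x) = 1 := by
          rw [map_add, map_smul, hu0, smul_eq_mul, hcu, zero_add]
        have hiso := stmt13_iso_add hskew hu0 hxx c hherm
        obtain ⟨g, hgmem, hgz, -⟩ := stmt13_atom hskew b hu0 hiso
          (by rw [hpair]; exact isUnit_one) (by rw [hpair]; exact star_one S)
        refine ⟨u + c • x, ⟨g, Subgroup.subset_closure hgmem, hgz⟩, hiso, i1, hne,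
          Or.inl ?_⟩
        have hrepr : b.repr (u + c • x) (Sum.inl i1) = b.repr u (Sum.inl i1) + c := by
          simp [hx, map_add, map_smul, Finsupp.add_apply, Finsupp.smul_apply, smul_eq_mul,
            Module.Basis.repr_self, Finsupp.single_apply, hne, Ne.symm hne]
        rw [hrepr]
        exact stmt13_nonunit_add_unit (H i1 hne).1 ρ⁻¹.isUnit
      · -- bump along x = f_{i1} + f_{i0}
        have hc0 : IsUnit (b.repr u (Sum.inl i0)) := hk0.resolve_right hc
        set x : V := b (Sum.inr i1) + b (Sum.inr i0) with hx
        have hxx : h x x = 0 := by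
          simp [hx, map_add, LinearMap.add_apply, hb.2.2]
        have hux : h u x
            = star (b.repr u (Sum.inl i1)) + star (b.repr u (Sum.inl i0)) := by
          simp only [hx, map_add, stmt13_coordR' hskew hb]
        have huxu : IsUnit (h u x) := by
          rw [hux]
          exact stmt13_nonunit_add_unit
            (fun hh => (H i1 hne).1 (isUnit_star.mp hh)) hc0.star
        obtain ⟨ρ, hρ⟩ := huxu
        set c : S := (↑ρ⁻¹ : S) with hcdef
        have hcu : c * h u x = 1 := by rw [hcdef, ← hρ]; exact ρ.inv_mul
        have hherm : star (c * h u x) = c * h u x := by rw [hcu, star_one]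
        have hpair : h u (u + c • x) = 1 := by
          rw [map_add, map_smul, hu0, smul_eq_mul, hcu, zero_add]
        have hiso := stmt13_iso_add hskew hu0 hxx c hherm
        obtain ⟨g, hgmem, hgz, -⟩ := stmt13_atom hskew b hu0 hiso
          (by rw [hpair]; exact isUnit_one) (by rw [hpair]; exact star_one S)
        refine ⟨u + c • x, ⟨g, Subgroup.subset_closure hgmem, hgz⟩, hiso, i1, hne,
          Or.inr ?_⟩
        have hrepr : b.repr (u + c • x) (Sum.inr i1) = b.repr u (Sum.inr i1) + c := by
          simp [hx, map_add, map_smul, Finsupp.add_apply, Finsupp.smul_apply, smul_eq_mul,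
            Module.Basis.repr_self, Finsupp.single_apply, hne, Ne.symm hne]
        rw [hrepr]
        exact stmt13_nonunit_add_unit (H i1 hne).2 ρ⁻¹.isUnit
  obtain ⟨u₂, hreach, hu₂0, J, hJ, hJu⟩ := phaseA
  -- Phase B : the chain u₂ → z1 → z2 → e_{i0}
  have hz1ex : ∃ z1 : V, h z1 z1 = 0 ∧ h u₂ z1 = 1 ∧
      b.repr z1 (Sum.inl i0) = 1 ∧ b.repr z1 (Sum.inr i0) = 0 := by
    rcases hJu with haJ | hbJ
    · obtain ⟨s, hs⟩ := haJ.star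
      set d : S := (↑s⁻¹ : S) * (1 + star (b.repr u₂ (Sum.inr i0))) with hd
      refine ⟨b (Sum.inl i0) + d • b (Sum.inr J), ?_, ?_, ?_, ?_⟩
      · simp [map_add, LinearMap.map_smulₛₗ, LinearMap.add_apply, LinearMap.smul_apply,
          smul_eq_mul, starRingEnd_apply, stmt13_coordL hb, stmt13_coordR hskew hb,
          Finsupp.add_apply, Finsupp.smul_apply, Module.Basis.repr_self, Finsupp.single_apply,
          hJ, Ne.symm hJ]
      · have hval : h u₂ (b (Sum.inl i0) + d • b (Sum.inr J))
            = - star (b.repr u₂ (Sum.inr i0)) + d * star (b.repr u₂ (Sum.inl J)) := by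
          simp [map_add, map_smul, smul_eq_mul, stmt13_coordL' hskew hb,
            stmt13_coordR' hskew hb]
        rw [hval, hd, ← hs]
        linear_combination (1 + star (b.repr u₂ (Sum.inr i0))) * s.inv_mul
      · simp [map_add, map_smul, Finsupp.add_apply, Finsupp.smul_apply, smul_eq_mul,
          Module.Basis.repr_self, Finsupp.single_apply, hJ, Ne.symm hJ]
      · simp [map_add, map_smul, Finsupp.add_apply, Finsupp.smul_apply, smul_eq_mul,
          Module.Basis.repr_self, Finsupp.single_apply, hJ, Ne.symm hJ]
    · obtain ⟨s, hs⟩ := hbJ.star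
      set d : S := -((↑s⁻¹ : S) * (1 + star (b.repr u₂ (Sum.inr i0)))) with hd
      refine ⟨b (Sum.inl i0) + d • b (Sum.inl J), ?_, ?_, ?_, ?_⟩
      · simp [map_add, LinearMap.map_smulₛₗ, LinearMap.add_apply, LinearMap.smul_apply,
          smul_eq_mul, starRingEnd_apply, stmt13_coordL hb, stmt13_coordR hskew hb,
          Finsupp.add_apply, Finsupp.smul_apply, Module.Basis.repr_self, Finsupp.single_apply,
          hJ, Ne.symm hJ]
      · have hval : h u₂ (b (Sum.inl i0) + d • b (Sum.inl J))
            = - star (b.repr u₂ (Sum.inr i0)) + d * (- star (b.repr u₂ (Sum.inr J))) := by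
          simp [map_add, map_smul, smul_eq_mul, stmt13_coordL' hskew hb]
        rw [hval, hd, ← hs]
        linear_combination (1 + star (b.repr u₂ (Sum.inr i0))) * s.inv_mul
      · simp [map_add, map_smul, Finsupp.add_apply, Finsupp.smul_apply, smul_eq_mul,
          Module.Basis.repr_self, Finsupp.single_apply, hJ, Ne.symm hJ]
      · simp [map_add, map_smul, Finsupp.add_apply, Finsupp.smul_apply, smul_eq_mul,
          Module.Basis.repr_self, Finsupp.single_apply, hJ, Ne.symm hJ]
  obtain ⟨z1, hz1iso, hγ1, hz1l, hz1r⟩ := hz1ex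
  have hop1 : ∃ g ∈ Subgroup.closure (transvSet h m), (↑g : Module.End S V) u₂ = z1 := by
    obtain ⟨g, hmem, hgz, -⟩ := stmt13_atom hskew b hu₂0 hz1iso
      (by rw [hγ1]; exact isUnit_one) (by rw [hγ1]; exact star_one S)
    exact ⟨g, Subgroup.subset_closure hmem, hgz⟩
  set z2 : V := b (Sum.inl i0) - b (Sum.inr i0) with hz2def
  have hz2iso : h z2 z2 = 0 := by
    simp [hz2def, map_sub, LinearMap.sub_apply, hb.1, hb.2.1, hb.2.2,
      stmt13_p_fe hskew hb]
  have hz1z2 : h z1 z2 = -1 := by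
    rw [hz2def, map_sub, stmt13_coordL' hskew hb, stmt13_coordR' hskew hb, hz1l, hz1r]
    simp
  have hop2 : ∃ g ∈ Subgroup.closure (transvSet h m), (↑g : Module.End S V) z1 = z2 := by
    obtain ⟨g, hmem, hgz, -⟩ := stmt13_atom hskew b hz1iso hz2iso
      (by rw [hz1z2]; exact isUnit_one.neg) (by rw [hz1z2]; simp)
    exact ⟨g, Subgroup.subset_closure hmem, hgz⟩
  have hz2e : h z2 (b (Sum.inl i0)) = 1 := by
    rw [stmt13_coordL' hskew hb, hz2def]
    simp [map_sub, Finsupp.sub_apply, Module.Basis.repr_self, Finsupp.single_apply]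
  have hop3 : ∃ g ∈ Subgroup.closure (transvSet h m),
      (↑g : Module.End S V) z2 = b (Sum.inl i0) := by
    obtain ⟨g, hmem, hgz, -⟩ := stmt13_atom hskew b hz2iso (hb.2.1 i0 i0)
      (by rw [hz2e]; exact isUnit_one) (by rw [hz2e]; exact star_one S)
    exact ⟨g, Subgroup.subset_closure hmem, hgz⟩
  exact stmt13_comp2 (stmt13_comp2 (stmt13_comp2 hreach hop1) hop2) hop3

end Aux13D
section Aux13E

variable {m : ℕ} {h : V →ₛₗ[starRingEnd S] V →ₗ[S] S}

/-- Step 3: the transvection group moves any isotropic vector whose `f_{i0}`-coordinate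
is `1` to the basis vector `f_{i0}`, fixing `e_{i0}`. -/
theorem stmt13_step3 [IsLocalRing S] (hskew : ∀ x y, star (h x y) = - h y x)
    (b : Module.Basis (Fin m ⊕ Fin m) S V) (hb : IsSympBasis h b)
    {i0 i1 : Fin m} (hne : i1 ≠ i0) {w : V} (hw0 : h w w = 0)
    (hw1 : b.repr w (Sum.inr i0) = 1) :
    ∃ g ∈ Subgroup.closure (transvSet h m),
      (↑g : Module.End S V) w = b (Sum.inr i0) ∧
      (↑g : Module.End S V) (b (Sum.inl i0)) = b (Sum.inl i0) := by
  classical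
  -- Phase A : reach w₂ with a unit coordinate outside slot i0, keeping the
  -- f_{i0}-coordinate equal to 1 and fixing e_{i0}
  have phaseA : ∃ w₂ : V,
      (∃ g ∈ Subgroup.closure (transvSet h m), (↑g : Module.End S V) w = w₂ ∧
        (↑g : Module.End S V) (b (Sum.inl i0)) = b (Sum.inl i0))
      ∧ h w₂ w₂ = 0 ∧ b.repr w₂ (Sum.inr i0) = 1
      ∧ ∃ J : Fin m, J ≠ i0 ∧
        (IsUnit (b.repr w₂ (Sum.inl J)) ∨ IsUnit (b.repr w₂ (Sum.inr J))) := by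
    by_cases H : ∃ J, J ≠ i0 ∧
        (IsUnit (b.repr w (Sum.inl J)) ∨ IsUnit (b.repr w (Sum.inr J)))
    · exact ⟨w, ⟨1, one_mem _, by simp, by simp⟩, hw0, hw1, H⟩
    · push_neg at H
      set x : V := b (Sum.inl i1) + b (Sum.inl i0) with hx
      have hxx : h x x = 0 := by
        simp [hx, map_add, LinearMap.add_apply, hb.2.1]
      have hux : h w x
          = -(star (b.repr w (Sum.inr i1)) + 1) := by
        simp only [hx, map_add, stmt13_coordL' hskew hb, hw1, star_one]
        ring
      have huxu : IsUnit (h w x) := by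
        rw [hux]
        exact (stmt13_nonunit_add_unit
          (fun hh => (H i1 hne).2 (isUnit_star.mp hh)) isUnit_one).neg
      obtain ⟨ρ, hρ⟩ := huxu
      set c : S := (↑ρ⁻¹ : S) with hcdef
      have hcu : c * h w x = 1 := by rw [hcdef, ← hρ]; exact ρ.inv_mul
      have hherm : star (c * h w x) = c * h w x := by rw [hcu, star_one]
      have hpair : h w (w + c • x) = 1 := by
        rw [map_add, map_smul, hw0, smul_eq_mul, hcu, zero_add]
      have hiso := stmt13_iso_add hskew hw0 hxx c hherm
      obtain ⟨g, hgmem, hgz, hgfix⟩ := stmt13_atom hskew b hw0 hiso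
        (by rw [hpair]; exact isUnit_one) (by rw [hpair]; exact star_one S)
      have hfixe : (↑g : Module.End S V) (b (Sum.inl i0)) = b (Sum.inl i0) := by
        refine hgfix _ ?_
        have hxe : h x (b (Sum.inl i0)) = 0 := by
          simp [hx, map_add, LinearMap.add_apply, hb.2.1]
        simp only [map_add, LinearMap.map_smulₛₗ, LinearMap.add_apply,
          LinearMap.smul_apply, smul_eq_mul, starRingEnd_apply, hxe, mul_zero, add_zero]
      refine ⟨w + c • x, ⟨g, Subgroup.subset_closure hgmem, hgz, hfixe⟩, hiso, ?_, i1,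
        hne, Or.inl ?_⟩
      · have : b.repr (w + c • x) (Sum.inr i0) = b.repr w (Sum.inr i0) := by
          simp [hx, map_add, map_smul, Finsupp.add_apply, Finsupp.smul_apply, smul_eq_mul,
            Module.Basis.repr_self, Finsupp.single_apply]
        rw [this, hw1]
      · have hrepr : b.repr (w + c • x) (Sum.inl i1) = b.repr w (Sum.inl i1) + c := by
          simp [hx, map_add, map_smul, Finsupp.add_apply, Finsupp.smul_apply, smul_eq_mul,
            Module.Basis.repr_self, Finsupp.single_apply, hne, Ne.symm hne]
        rw [hrepr]
        exact stmt13_nonunit_add_unit (H i1 hne).1 ρ⁻¹.isUnit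
  obtain ⟨w₂, hreach, hw₂0, hw₂1, J, hJ, hJu⟩ := phaseA
  -- Phase B : chain w₂ → z1 → z2 → f_{i0}, fixing e_{i0} throughout
  have hz1ex : ∃ z1 : V, h z1 z1 = 0 ∧ h w₂ z1 = 1 ∧
      b.repr z1 (Sum.inr i0) = 1 ∧ b.repr z1 (Sum.inl i0) = 0 := by
    rcases hJu with haJ | hbJ
    · obtain ⟨s, hs⟩ := haJ.star
      set d : S := (↑s⁻¹ : S) * (1 - star (b.repr w₂ (Sum.inl i0))) with hd
      refine ⟨b (Sum.inr i0) + d • b (Sum.inr J), ?_, ?_, ?_, ?_⟩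
      · simp [map_add, LinearMap.map_smulₛₗ, LinearMap.add_apply, LinearMap.smul_apply,
          smul_eq_mul, starRingEnd_apply, stmt13_coordR hskew hb,
          Finsupp.add_apply, Finsupp.smul_apply, Module.Basis.repr_self, Finsupp.single_apply,
          hJ, Ne.symm hJ]
      · have hval : h w₂ (b (Sum.inr i0) + d • b (Sum.inr J))
            = star (b.repr w₂ (Sum.inl i0)) + d * star (b.repr w₂ (Sum.inl J)) := by
          simp [map_add, map_smul, smul_eq_mul, stmt13_coordR' hskew hb]
        rw [hval, hd, ← hs]
        linear_combination (1 - star (b.repr w₂ (Sum.inl i0))) * s.inv_mul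
      · simp [map_add, map_smul, Finsupp.add_apply, Finsupp.smul_apply, smul_eq_mul,
          Module.Basis.repr_self, Finsupp.single_apply, hJ, Ne.symm hJ]
      · simp [map_add, map_smul, Finsupp.add_apply, Finsupp.smul_apply, smul_eq_mul,
          Module.Basis.repr_self, Finsupp.single_apply, hJ, Ne.symm hJ]
    · obtain ⟨s, hs⟩ := hbJ.star
      set d : S := -((↑s⁻¹ : S) * (1 - star (b.repr w₂ (Sum.inl i0)))) with hd
      refine ⟨b (Sum.inr i0) + d • b (Sum.inl J), ?_, ?_, ?_, ?_⟩
      · simp [map_add, LinearMap.map_smulₛₗ, LinearMap.add_apply, LinearMap.smul_apply,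
          smul_eq_mul, starRingEnd_apply, stmt13_coordR hskew hb, stmt13_coordL hb,
          Finsupp.add_apply, Finsupp.smul_apply, Module.Basis.repr_self, Finsupp.single_apply,
          hJ, Ne.symm hJ]
      · have hval : h w₂ (b (Sum.inr i0) + d • b (Sum.inl J))
            = star (b.repr w₂ (Sum.inl i0)) + d * (- star (b.repr w₂ (Sum.inr J))) := by
          simp [map_add, map_smul, smul_eq_mul, stmt13_coordR' hskew hb,
            stmt13_coordL' hskew hb]
        rw [hval, hd, ← hs]
        linear_combination (1 - star (b.repr w₂ (Sum.inl i0))) * s.inv_mul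
      · simp [map_add, map_smul, Finsupp.add_apply, Finsupp.smul_apply, smul_eq_mul,
          Module.Basis.repr_self, Finsupp.single_apply, hJ, Ne.symm hJ]
      · simp [map_add, map_smul, Finsupp.add_apply, Finsupp.smul_apply, smul_eq_mul,
          Module.Basis.repr_self, Finsupp.single_apply, hJ, Ne.symm hJ]
  obtain ⟨z1, hz1iso, hγ1, hz1r, hz1l⟩ := hz1ex
  have hfix1 : h w₂ (b (Sum.inl i0)) = h z1 (b (Sum.inl i0)) := by
    rw [stmt13_coordL' hskew hb, stmt13_coordL' hskew hb, hw₂1, hz1r]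
  have hop1 : ∃ g ∈ Subgroup.closure (transvSet h m),
      (↑g : Module.End S V) w₂ = z1 ∧
      (↑g : Module.End S V) (b (Sum.inl i0)) = b (Sum.inl i0) := by
    obtain ⟨g, hmem, hgz, hgfix⟩ := stmt13_atom hskew b hw₂0 hz1iso
      (by rw [hγ1]; exact isUnit_one) (by rw [hγ1]; exact star_one S)
    exact ⟨g, Subgroup.subset_closure hmem, hgz, hgfix _ hfix1⟩
  set z2 : V := b (Sum.inr i0) - b (Sum.inl i0) with hz2def
  have hz2iso : h z2 z2 = 0 := by
    simp [hz2def, map_sub, LinearMap.sub_apply, hb.1, hb.2.1, hb.2.2,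
      stmt13_p_fe hskew hb]
  have hz2r : b.repr z2 (Sum.inr i0) = 1 := by
    simp [hz2def, map_sub, Finsupp.sub_apply, Module.Basis.repr_self, Finsupp.single_apply]
  have hz2l : b.repr z2 (Sum.inl i0) = -1 := by
    simp [hz2def, map_sub, Finsupp.sub_apply, Module.Basis.repr_self, Finsupp.single_apply]
  have hz1z2 : h z1 z2 = 1 := by
    rw [hz2def, map_sub, stmt13_coordR' hskew hb, stmt13_coordL' hskew hb, hz1l, hz1r]
    simp
  have hfix2 : h z1 (b (Sum.inl i0)) = h z2 (b (Sum.inl i0)) := by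
    rw [stmt13_coordL' hskew hb, stmt13_coordL' hskew hb, hz1r, hz2r]
  have hop2 : ∃ g ∈ Subgroup.closure (transvSet h m),
      (↑g : Module.End S V) z1 = z2 ∧
      (↑g : Module.End S V) (b (Sum.inl i0)) = b (Sum.inl i0) := by
    obtain ⟨g, hmem, hgz, hgfix⟩ := stmt13_atom hskew b hz1iso hz2iso
      (by rw [hz1z2]; exact isUnit_one) (by rw [hz1z2]; exact star_one S)
    exact ⟨g, Subgroup.subset_closure hmem, hgz, hgfix _ hfix2⟩
  have hz2f : h z2 (b (Sum.inr i0)) = -1 := by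
    rw [stmt13_coordR' hskew hb, hz2l]
    simp
  have hfix3 : h z2 (b (Sum.inl i0)) = h (b (Sum.inr i0)) (b (Sum.inl i0)) := by
    rw [stmt13_coordL' hskew hb, stmt13_coordL' hskew hb, hz2r, Module.Basis.repr_self]
    simp [Finsupp.single_apply]
  have hop3 : ∃ g ∈ Subgroup.closure (transvSet h m),
      (↑g : Module.End S V) z2 = b (Sum.inr i0) ∧
      (↑g : Module.End S V) (b (Sum.inl i0)) = b (Sum.inl i0) := by
    obtain ⟨g, hmem, hgz, hgfix⟩ := stmt13_atom hskew b hz2iso (hb.2.2 i0 i0)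
      (by rw [hz2f]; exact isUnit_one.neg) (by rw [hz2f]; simp)
    exact ⟨g, Subgroup.subset_closure hmem, hgz, hgfix _ hfix3⟩
  exact stmt13_comp2F (stmt13_comp2F (stmt13_comp2F hreach hop1) hop2) hop3

end Aux13E
section Aux13F

variable {m : ℕ} {h : V →ₛₗ[starRingEnd S] V →ₗ[S] S}

/-- Any symplectic pair can be moved to the standard pair `(e₀, f₀)`. -/
theorem stmt13_toStd [IsLocalRing S] (hm : 2 ≤ m) (hskew : ∀ x y, star (h x y) = - h y x)
    (b : Module.Basis (Fin m ⊕ Fin m) S V) (hb : IsSympBasis h b) {u v : V}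
    (hu0 : h u u = 0) (hv0 : h v v = 0) (huv : h u v = 1) :
    ∃ g ∈ Subgroup.closure (transvSet h m),
      (↑g : Module.End S V) u = b (Sum.inl ⟨0, by omega⟩) ∧
      (↑g : Module.End S V) v = b (Sum.inr ⟨0, by omega⟩) := by
  have hne : (⟨1, by omega⟩ : Fin m) ≠ (⟨0, by omega⟩ : Fin m) := by
    simp [Fin.ext_iff]
  obtain ⟨g1, hg1m, hg1u⟩ := stmt13_step1 hskew b hb hne hu0
    (show IsUnit (h u v) by rw [huv]; exact isUnit_one)
  have hpres := stmt13_closure_preserves hskew g1 hg1m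
  have hv1iso : h ((↑g1 : Module.End S V) v) ((↑g1 : Module.End S V) v) = 0 := by
    rw [hpres]; exact hv0
  have hv1r : b.repr ((↑g1 : Module.End S V) v) (Sum.inr ⟨0, by omega⟩) = 1 := by
    rw [← stmt13_coordL hb, ← hg1u, hpres]; exact huv
  obtain ⟨g2, hg2m, hg2v, hg2e⟩ := stmt13_step3 hskew b hb hne hv1iso hv1r
  refine ⟨g2 * g1, mul_mem hg2m hg1m, ?_, ?_⟩
  · rw [Units.val_mul, Module.End.mul_apply, hg1u, hg2e]
  · rw [Units.val_mul, Module.End.mul_apply, hg2v]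

end Aux13F

/-- for `m ≥ 2` and `2 ∈ S^×`, the group generated by unitary
transvections acts transitively on symplectic pairs of `V`. -/
theorem stmt13 [IsLocalRing S] {m : ℕ} (hm : 2 ≤ m) (h2 : IsUnit (2 : S))
    (h : V →ₛₗ[starRingEnd S] V →ₗ[S] S)
    (hskew : ∀ x y, star (h x y) = - h y x)
    (hnd : ∀ x, (∀ y, h x y = 0) → x = 0)
    (b : Module.Basis (Fin m ⊕ Fin m) S V) (hb : IsSympBasis h b)
    (u v u' v' : V)
    (hu0 : h u u = 0) (hv0 : h v v = 0) (huv : h u v = 1)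
    (hu0' : h u' u' = 0) (hv0' : h v' v' = 0) (huv' : h u' v' = 1) :
    ∃ g ∈ Subgroup.closure (transvSet h m),
      (g : Module.End S V) u = u' ∧ (g : Module.End S V) v = v' := by
  obtain ⟨g, hgm, hgu, hgv⟩ := stmt13_toStd hm hskew b hb hu0 hv0 huv
  obtain ⟨g', hgm', hgu', hgv'⟩ := stmt13_toStd hm hskew b hb hu0' hv0' huv'
  have hcan : ∀ t, (↑g'⁻¹ : Module.End S V) ((↑g' : Module.End S V) t) = t := by
    intro t
    rw [← Module.End.mul_apply, ← Units.val_mul, inv_mul_cancel g', Units.val_one,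
      Module.End.one_apply]
  refine ⟨g'⁻¹ * g, mul_mem (inv_mem hgm') hgm, ?_, ?_⟩
  · rw [Units.val_mul, Module.End.mul_apply, hgu, ← hgu', hcan]
  · rw [Units.val_mul, Module.End.mul_apply, hgv, ← hgv', hcan]
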